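/- (Johnson-type bound, complementary form) L(W,n,w) ≤ ⌊(n/(n−w))·L(W,n−1,w)⌋. -/

import Mathlib

def weight {n : ℕ} (B : Fin n → Bool) : ℕ :=
  (Finset.univ.filter (fun i => B i = true)).card

def hamming {n : ℕ} (B B' : Fin n → Bool) : ℕ :=
  (Finset.univ.filter (fun i => B i ≠ B' i)).card

theorem hamming_comm {n : ℕ} (B B' : Fin n → Bool) : hamming B B' = hamming B' B := by
  unfold hamming; congr 1; ext i; simp [ne_comm]

def johnson (n w : ℕ) : SimpleGraph {B : Fin n → Bool // weight B = w} where
  Adj B B' := hamming B.1 B'.1 = 2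
  symm := ⟨fun B B' h => by rwa [hamming_comm]⟩
  loopless := ⟨fun B h => by simp [hamming] at h⟩

structure GraphOrientation {V : Type*} (G : SimpleGraph V) where
  dir : V → V → Prop
  dir_adj : ∀ u v, dir u v → G.Adj u v
  total : ∀ u v, G.Adj u v → dir u v ∨ dir v u
  asymm : ∀ u v, dir u v → ¬ dir v u

noncomputable def outdeg {V : Type*} {G : SimpleGraph V} (Λ : GraphOrientation G) (v : V) : ℕ :=
  {u | Λ.dir v u}.ncard

noncomputable def Lmax (W n w : ℕ) : ℕ :=
  sSup {k | ∃ Λ : GraphOrientation (johnson n w), k = {B | outdeg Λ B ≤ W}.ncard}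

open scoped Classical

namespace Stmt11Aux

/-- Every graph admits an orientation, via a well-ordering. -/
noncomputable def someOrientation {V : Type*} (G : SimpleGraph V) : GraphOrientation G where
  dir u v := G.Adj u v ∧ WellOrderingRel u v
  dir_adj u v h := h.1
  total u v h := by
    rcases trichotomous_of WellOrderingRel u v with h1 | rfl | h1
    · exact Or.inl ⟨h, h1⟩
    · exact absurd h G.irrefl
    · exact Or.inr ⟨h.symm, h1⟩
  asymm u v h h' := asymm_of WellOrderingRel h.2 h'.2

lemma ncard_setOf_eq_card_filter {α : Type*} [Fintype α] (p : α → Prop) [DecidablePred p] :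
    {x | p x}.ncard = (Finset.univ.filter p).card := by
  rw [← Set.ncard_coe_finset]
  congr 1
  ext x
  simp

lemma bddAbove_Lmax_set (W n w : ℕ) :
    BddAbove {k | ∃ Λ : GraphOrientation (johnson n w), k = {B | outdeg Λ B ≤ W}.ncard} := by
  refine ⟨Nat.card {B : Fin n → Bool // weight B = w}, ?_⟩
  rintro k ⟨Λ, rfl⟩
  calc {B | outdeg Λ B ≤ W}.ncard ≤ (Set.univ : Set _).ncard :=
        Set.ncard_le_ncard (Set.subset_univ _) (Set.toFinite _)
    _ = _ := Set.ncard_univ _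

lemma le_Lmax {W n w : ℕ} (Λ : GraphOrientation (johnson n w)) :
    {B | outdeg Λ B ≤ W}.ncard ≤ Lmax W n w :=
  le_csSup (bddAbove_Lmax_set W n w) ⟨Λ, rfl⟩

lemma weight_insertNth {n : ℕ} (i : Fin (n+1)) (B : Fin n → Bool) :
    weight (i.insertNth false B) = weight B := by
  unfold weight
  simp only [Finset.card_filter]
  rw [Fin.sum_univ_succAbove _ i]
  simp

lemma hamming_insertNth {n : ℕ} (i : Fin (n+1)) (B B' : Fin n → Bool) :
    hamming (i.insertNth false B) (i.insertNth false B') = hamming B B' := by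
  unfold hamming
  simp only [Finset.card_filter]
  rw [Fin.sum_univ_succAbove _ i]
  simp

/-- insert a `false` bit at coordinate `i`. -/
def φ {n w : ℕ} (i : Fin (n+1)) (B : {B : Fin n → Bool // weight B = w}) :
    {B : Fin (n+1) → Bool // weight B = w} :=
  ⟨i.insertNth false B.1, by rw [weight_insertNth]; exact B.2⟩

lemma φ_inj {n w : ℕ} (i : Fin (n+1)) : Function.Injective (φ (n := n) (w := w) i) := by
  intro B B' h
  apply Subtype.ext
  funext j
  have h2 := congrFun (congrArg Subtype.val h) (i.succAbove j)
  simpa [φ] using h2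

lemma adj_φ {n w : ℕ} (i : Fin (n+1)) (u v : {B : Fin n → Bool // weight B = w}) :
    (johnson (n+1) w).Adj (φ i u) (φ i v) ↔ (johnson n w).Adj u v := by
  show hamming (φ i u).1 (φ i v).1 = 2 ↔ hamming u.1 v.1 = 2
  simp only [φ]
  rw [hamming_insertNth]

/-- restriction of an orientation to the coordinate-`i`-is-zero subgraph. -/
noncomputable def restrict {n w : ℕ} (Λ : GraphOrientation (johnson (n+1) w)) (i : Fin (n+1)) :
    GraphOrientation (johnson n w) where
  dir u v := Λ.dir (φ i u) (φ i v)
  dir_adj u v h := (adj_φ i u v).1 (Λ.dir_adj _ _ h)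
  total u v h := Λ.total _ _ ((adj_φ i u v).2 h)
  asymm u v h := Λ.asymm _ _ h

lemma outdeg_restrict_le {n w : ℕ} (Λ : GraphOrientation (johnson (n+1) w)) (i : Fin (n+1))
    (u : {B : Fin n → Bool // weight B = w}) :
    outdeg (restrict Λ i) u ≤ outdeg Λ (φ i u) := by
  unfold outdeg
  have h1 : φ i '' {v | (restrict Λ i).dir u v} ⊆ {x | Λ.dir (φ i u) x} := by
    rintro _ ⟨v, hv, rfl⟩; exact hv
  calc {v | (restrict Λ i).dir u v}.ncard
      = (φ i '' {v | (restrict Λ i).dir u v}).ncard :=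
        (Set.ncard_image_of_injective _ (φ_inj i)).symm
    _ ≤ _ := Set.ncard_le_ncard h1 (Set.toFinite _)

lemma core {W w n : ℕ} (hw : w < n + 1) (Λ : GraphOrientation (johnson (n+1) w)) :
    (n + 1 - w) * {B | outdeg Λ B ≤ W}.ncard ≤ (n + 1) * Lmax W n w := by
  set F : Finset {B : Fin (n+1) → Bool // weight B = w} :=
    Finset.univ.filter (fun B => outdeg Λ B ≤ W) with hF
  -- per-coordinate bound
  have key : ∀ i : Fin (n+1),
      (F.filter (fun B => B.1 i = false)).card ≤ Lmax W n w := by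
    intro i
    set T : Finset {B : Fin n → Bool // weight B = w} :=
      Finset.univ.filter (fun u => outdeg (restrict Λ i) u ≤ W) with hT
    have hsub : F.filter (fun B => B.1 i = false) ⊆ T.image (φ i) := by
      intro B hB
      simp only [hF, Finset.mem_filter, Finset.mem_univ, true_and] at hB
      obtain ⟨hBW, hBi⟩ := hB
      have hins : i.insertNth false (i.removeNth B.1) = B.1 := by
        conv_lhs => rw [← hBi]
        exact Fin.insertNth_self_removeNth i B.1
      have hwu : weight (i.removeNth B.1) = w := by
        rw [← weight_insertNth i (i.removeNth B.1), hins]; exact B.2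
      refine Finset.mem_image.2 ⟨⟨i.removeNth B.1, hwu⟩, ?_, ?_⟩
      · simp only [hT, Finset.mem_filter, Finset.mem_univ, true_and]
        calc outdeg (restrict Λ i) _ ≤ outdeg Λ (φ i ⟨i.removeNth B.1, hwu⟩) :=
              outdeg_restrict_le Λ i _
          _ = outdeg Λ B := by congr 1; exact Subtype.ext hins
          _ ≤ W := hBW
      · exact Subtype.ext hins
    calc (F.filter (fun B => B.1 i = false)).card
        ≤ (T.image (φ i)).card := Finset.card_le_card hsub
      _ = T.card := Finset.card_image_of_injective _ (φ_inj i)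
      _ ≤ Lmax W n w := by
          rw [hT, ← ncard_setOf_eq_card_filter]
          exact le_Lmax (restrict Λ i)
  -- double counting
  have hcount : ∀ B : {B : Fin (n+1) → Bool // weight B = w},
      (Finset.univ.filter (fun i => B.1 i = false)).card = n + 1 - w := by
    intro B
    have h1 := Finset.card_filter_add_card_filter_not
      (s := (Finset.univ : Finset (Fin (n+1)))) (p := fun i => B.1 i = true)
    have h2 : (Finset.univ.filter (fun i => ¬ B.1 i = true)) =
        (Finset.univ.filter (fun i => B.1 i = false)) := by
      apply Finset.filter_congr; intro i _; simp
    have h3 : (Finset.univ.filter (fun i => B.1 i = true)).card = w := B.2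
    rw [h2, h3] at h1
    simp only [Finset.card_univ, Fintype.card_fin] at h1
    omega
  have hdc : (n + 1 - w) * F.card
      = ∑ i : Fin (n+1), (F.filter (fun B => B.1 i = false)).card := by
    have : ∀ i : Fin (n+1), (F.filter (fun B => B.1 i = false)).card
        = ∑ B ∈ F, if B.1 i = false then 1 else 0 := by
      intro i; exact Finset.card_filter _ _
    simp only [this]
    rw [Finset.sum_comm]
    have : ∀ B ∈ F, (∑ i : Fin (n+1), if B.1 i = false then 1 else 0) = n + 1 - w := by
      intro B _
      rw [← Finset.card_filter]
      exact hcount B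
    rw [Finset.sum_congr rfl this, Finset.sum_const, smul_eq_mul, mul_comm]
  have hS : {B | outdeg Λ B ≤ W}.ncard = F.card := by
    rw [hF]; exact ncard_setOf_eq_card_filter _
  rw [hS, hdc]
  calc (∑ i : Fin (n+1), (F.filter (fun B => B.1 i = false)).card)
      ≤ ∑ _i : Fin (n+1), Lmax W n w := Finset.sum_le_sum (fun i _ => key i)
    _ = (n + 1) * Lmax W n w := by simp [Finset.sum_const, mul_comm]

end Stmt11Aux

open Stmt11Aux in
theorem stmt11 (W n w : ℕ) (hw : w < n) :
    Lmax W n w ≤ n * Lmax W (n - 1) w / (n - w) := by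
  obtain ⟨m, rfl⟩ : ∃ m, n = m + 1 := ⟨n - 1, by omega⟩
  rw [Nat.add_sub_cancel]
  conv_lhs => rw [Lmax]
  refine csSup_le ?_ ?_
  · exact ⟨_, ⟨someOrientation (johnson (m+1) w), rfl⟩⟩
  rintro k ⟨Λ, rfl⟩
  rw [Nat.le_div_iff_mul_le (by omega : 0 < m + 1 - w), mul_comm]
  exact core hw Λ
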